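/- There exists a constant C > 0 such that for every primitive non-deficient positive integer n with smallest prime factor p₁, one has H(n) ≤ 2 + C/p₁. -/

import Mathlib

open Real Finset

/-- `H n = ∏_{p ∣ n} p/(p-1)` over the distinct prime divisors of `n`. -/
noncomputable def H (n : ℕ) : ℝ := ∏ p ∈ n.primeFactors, (p : ℝ) / ((p : ℝ) - 1)


lemma telescope (S : Finset ℕ) : ∀ N : ℕ, 2 ≤ N → (∀ m ∈ S, N ≤ m) →
    ∏ m ∈ S, (m:ℝ)^2 / ((m:ℝ)^2 - 1) ≤ (N:ℝ) / ((N:ℝ) - 1) := by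
  induction S using Finset.strongInduction with
  | _ S ih =>
    intro N hN hS
    have hN1 : (1:ℝ) ≤ (N:ℝ) - 1 := by
      have : (2:ℝ) ≤ (N:ℝ) := by exact_mod_cast hN
      linarith
    rcases S.eq_empty_or_nonempty with rfl | hne
    · simp only [Finset.prod_empty]
      rw [le_div_iff₀ (by linarith)]
      linarith
    · set m0 := S.min' hne with hm0def
      have hm0S : m0 ∈ S := S.min'_mem hne
      have hm0 : N ≤ m0 := hS _ hm0S
      have h2 : 2 ≤ m0 := le_trans hN hm0
      have hx2 : (2:ℝ) ≤ (m0:ℝ) := by exact_mod_cast h2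
      have hsub : S.erase m0 ⊂ S := Finset.erase_ssubset hm0S
      have hrest : ∀ m ∈ S.erase m0, m0 + 1 ≤ m := by
        intro m hm
        have h1 := S.min'_le m (Finset.mem_of_mem_erase hm)
        have h2' := Finset.ne_of_mem_erase hm
        omega
      have hI := ih _ hsub (m0+1) (by omega) hrest
      rw [← Finset.prod_erase_mul S _ hm0S]
      have hcast : ((m0+1 : ℕ):ℝ) = (m0:ℝ) + 1 := by push_cast; ring
      rw [hcast] at hI
      have hx1 : (0:ℝ) < (m0:ℝ)^2 - 1 := by nlinarith
      have hf0 : (0:ℝ) ≤ (m0:ℝ)^2 / ((m0:ℝ)^2 - 1) := by positivity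
      have hstep : (∏ m ∈ S.erase m0, (m:ℝ)^2 / ((m:ℝ)^2 - 1)) * ((m0:ℝ)^2 / ((m0:ℝ)^2 - 1))
          ≤ (((m0:ℝ)+1) / (((m0:ℝ)+1) - 1)) * ((m0:ℝ)^2 / ((m0:ℝ)^2 - 1)) := by
        apply mul_le_mul_of_nonneg_right hI hf0
      refine hstep.trans ?_
      have heq : (((m0:ℝ)+1) / (((m0:ℝ)+1) - 1)) * ((m0:ℝ)^2 / ((m0:ℝ)^2 - 1))
          = (m0:ℝ) / ((m0:ℝ) - 1) := by
        have h1 : (m0:ℝ) ≠ 0 := by linarith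
        have h3 : (m0:ℝ)^2 - 1 ≠ 0 := ne_of_gt hx1
        have h4 : (m0:ℝ) - 1 ≠ 0 := by intro h; nlinarith
        rw [div_mul_div_comm, div_eq_div_iff (mul_ne_zero (by rw [add_sub_cancel_right]; exact h1) h3) h4]
        ring
      rw [heq]
      rw [div_le_div_iff₀ (by linarith) (by linarith)]
      have hxN : (N:ℝ) ≤ (m0:ℝ) := by exact_mod_cast hm0
      nlinarith


lemma sigma_le_succ_mul (p n : ℕ) (hp : p.Prime) (hpn : p ∣ n) (hn : n ≠ 0) :
    ArithmeticFunction.sigma 1 n ≤ (p + 1) * ArithmeticFunction.sigma 1 (n / p) := by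
  set m := n / p with hm
  have hnm : n = p * m := (Nat.mul_div_cancel' hpn).symm
  have hm0 : m ≠ 0 := by
    intro h; rw [h, mul_zero] at hnm; exact hn hnm
  have hmd : m ∣ n := Nat.div_dvd_of_dvd hpn
  have hsub : m.divisors ⊆ n.divisors := Nat.divisors_subset_of_dvd hn hmd
  rw [ArithmeticFunction.sigma_one_apply, ArithmeticFunction.sigma_one_apply]
  have hsplit : ∑ d ∈ n.divisors, d
      = (∑ d ∈ n.divisors \ m.divisors, d) + ∑ d ∈ m.divisors, d :=
    (Finset.sum_sdiff hsub).symm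
  rw [hsplit]
  have hpdvd : ∀ d ∈ n.divisors \ m.divisors, p ∣ d ∧ d / p ∣ m := by
    intro d hd
    rw [Finset.mem_sdiff, Nat.mem_divisors, Nat.mem_divisors] at hd
    obtain ⟨⟨hdn, -⟩, hdm⟩ := hd
    have hpd : p ∣ d := by
      by_contra hnd
      have hco : d.Coprime p := ((Nat.Prime.coprime_iff_not_dvd hp).mpr hnd).symm
      have : d ∣ m := hco.dvd_of_dvd_mul_left (hnm ▸ hdn)
      exact hdm ⟨this, hm0⟩
    refine ⟨hpd, ?_⟩
    obtain ⟨e, rfl⟩ := hpd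
    rw [Nat.mul_div_cancel_left e hp.pos]
    have : p * e ∣ p * m := hnm ▸ hdn
    exact (Nat.mul_dvd_mul_iff_left hp.pos).mp this
  have key : (∑ d ∈ n.divisors \ m.divisors, d) ≤ p * ∑ d ∈ m.divisors, d := by
    have h1 : (∑ d ∈ n.divisors \ m.divisors, d)
        = p * ∑ d ∈ n.divisors \ m.divisors, d / p := by
      rw [Finset.mul_sum]
      refine Finset.sum_congr rfl ?_
      intro d hd
      exact (Nat.mul_div_cancel' (hpdvd d hd).1).symm
    rw [h1]
    refine Nat.mul_le_mul_left p ?_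
    have hinj : ∀ d₁ ∈ n.divisors \ m.divisors, ∀ d₂ ∈ n.divisors \ m.divisors,
        d₁ / p = d₂ / p → d₁ = d₂ := by
      intro d₁ h₁ d₂ h₂ h
      have e₁ := Nat.mul_div_cancel' (hpdvd d₁ h₁).1
      have e₂ := Nat.mul_div_cancel' (hpdvd d₂ h₂).1
      rw [← e₁, ← e₂, h]
    calc ∑ d ∈ n.divisors \ m.divisors, d / p
        = ∑ e ∈ (n.divisors \ m.divisors).image (· / p), e :=
          (Finset.sum_image (f := fun e : ℕ => e) (g := fun d : ℕ => d / p) hinj).symm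
      _ ≤ ∑ d ∈ m.divisors, d := by
          refine Finset.sum_le_sum_of_subset ?_
          intro e he
          rw [Finset.mem_image] at he
          obtain ⟨d, hd, rfl⟩ := he
          exact Nat.mem_divisors.mpr ⟨(hpdvd d hd).2, hm0⟩
  calc (∑ d ∈ n.divisors \ m.divisors, d) + ∑ d ∈ m.divisors, d
      ≤ p * (∑ d ∈ m.divisors, d) + ∑ d ∈ m.divisors, d := by omega
    _ = (p + 1) * ∑ d ∈ m.divisors, d := by ring

lemma H_le (n : ℕ) (hn : 2 ≤ n) :
    H n ≤ ((ArithmeticFunction.sigma 1 n : ℝ) / (n : ℝ)) *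
      ((n.minFac : ℝ) / ((n.minFac : ℝ) - 1)) := by
  have hn0 : n ≠ 0 := by omega
  have hminp : n.minFac.Prime := Nat.minFac_prime (by omega)
  have hmin2 : 2 ≤ n.minFac := hminp.two_le
  -- σ n as a product
  have hσ : (ArithmeticFunction.sigma 1 n : ℕ)
      = ∏ p ∈ n.primeFactors, ∑ k ∈ Finset.range (n.factorization p + 1), p ^ k := by
    rw [ArithmeticFunction.sigma_one_apply]
    exact Nat.sum_divisors hn0
  -- n as a product
  have hnprod : (n : ℕ) = ∏ p ∈ n.primeFactors, p ^ n.factorization p := by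
    conv_lhs => rw [← Nat.factorization_prod_pow_eq_self hn0]
    rw [Nat.prod_factorization_eq_prod_primeFactors]
  -- per-prime inequality
  have hper : ∀ p ∈ n.primeFactors,
      (p:ℝ) / ((p:ℝ) - 1) ≤
        (((∑ k ∈ Finset.range (n.factorization p + 1), p ^ k : ℕ) : ℝ)
          / ((p:ℝ) ^ n.factorization p)) * ((p:ℝ)^2 / ((p:ℝ)^2 - 1)) := by
    intro p hp
    have hpp : p.Prime := Nat.prime_of_mem_primeFactors hp
    have ha : 1 ≤ n.factorization p :=
      (Nat.Prime.factorization_pos_of_dvd hpp hn0 (Nat.dvd_of_mem_primeFactors hp))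
    set a := n.factorization p with hadef
    have hP2 : (2:ℝ) ≤ (p:ℝ) := by exact_mod_cast hpp.two_le
    -- S ≥ p^(a-1) + p^a
    have hSlb : p ^ (a-1) + p ^ a ≤ ∑ k ∈ Finset.range (a + 1), p ^ k := by
      have hpair : ({a-1, a} : Finset ℕ) ⊆ Finset.range (a+1) := by
        intro k hk
        simp only [Finset.mem_insert, Finset.mem_singleton] at hk
        rcases hk with rfl | rfl <;> simp [Finset.mem_range] <;> omega
      have hne : a - 1 ≠ a := by omega
      calc p ^ (a-1) + p ^ a = ∑ k ∈ ({a-1, a} : Finset ℕ), p ^ k := by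
            rw [Finset.sum_pair hne]
        _ ≤ ∑ k ∈ Finset.range (a + 1), p ^ k :=
            Finset.sum_le_sum_of_subset hpair
    have hSlbR : ((p:ℝ)) ^ (a-1) + (p:ℝ) ^ a
        ≤ ((∑ k ∈ Finset.range (a + 1), p ^ k : ℕ) : ℝ) := by
      exact_mod_cast hSlb
    have hpa : (p:ℝ) ^ a = (p:ℝ) ^ (a-1) * (p:ℝ) := by
      rw [← pow_succ]
      congr 1
      omega
    have hpow_pos : (0:ℝ) < (p:ℝ) ^ (a-1) := by positivity
    have hP1 : (0:ℝ) < (p:ℝ) - 1 := by linarith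
    have hP21 : (0:ℝ) < (p:ℝ)^2 - 1 := by nlinarith
    rw [div_mul_div_comm, div_le_div_iff₀ hP1 (by positivity)]
    -- p * (p^a * (p^2-1)) ≤ S * p^2 * (p-1)
    have hchain : (p:ℝ) * ((p:ℝ)^a * ((p:ℝ)^2 - 1))
        ≤ (((p:ℝ)) ^ (a-1) + (p:ℝ) ^ a) * (p:ℝ)^2 * ((p:ℝ) - 1) := by
      rw [hpa]; ring_nf; nlinarith [hpow_pos, hP2]
    calc (p:ℝ) * ((p:ℝ)^a * ((p:ℝ)^2 - 1))
        ≤ (((p:ℝ)) ^ (a-1) + (p:ℝ) ^ a) * (p:ℝ)^2 * ((p:ℝ) - 1) := hchain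
      _ ≤ ((∑ k ∈ Finset.range (a + 1), p ^ k : ℕ) : ℝ) * (p:ℝ)^2 * ((p:ℝ) - 1) := by
          have : (0:ℝ) ≤ (p:ℝ)^2 * ((p:ℝ) - 1) := by positivity
          nlinarith [hSlbR]
  -- combine
  have hprod : H n ≤ ∏ p ∈ n.primeFactors,
      ((((∑ k ∈ Finset.range (n.factorization p + 1), p ^ k : ℕ) : ℝ)
        / ((p:ℝ) ^ n.factorization p)) * ((p:ℝ)^2 / ((p:ℝ)^2 - 1))) := by
    apply Finset.prod_le_prod
    · intro p hp
      have hpp := Nat.prime_of_mem_primeFactors hp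
      have hP2 : (2:ℝ) ≤ (p:ℝ) := by exact_mod_cast hpp.two_le
      exact le_of_lt (div_pos (by positivity) (by linarith))
    · exact hper
  rw [Finset.prod_mul_distrib] at hprod
  have h1 : ∏ p ∈ n.primeFactors,
      (((∑ k ∈ Finset.range (n.factorization p + 1), p ^ k : ℕ) : ℝ)
        / ((p:ℝ) ^ n.factorization p))
      = (ArithmeticFunction.sigma 1 n : ℝ) / (n : ℝ) := by
    rw [Finset.prod_div_distrib]
    congr 1
    · rw [hσ]; push_cast; ring
    · conv_rhs => rw [hnprod]
      push_cast; ring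
  rw [h1] at hprod
  have h2 : ∏ p ∈ n.primeFactors, ((p:ℝ)^2 / ((p:ℝ)^2 - 1))
      ≤ (n.minFac : ℝ) / ((n.minFac : ℝ) - 1) := by
    apply telescope
    · exact hmin2
    · intro p hp
      exact Nat.minFac_le_of_dvd (Nat.prime_of_mem_primeFactors hp).two_le
        (Nat.dvd_of_mem_primeFactors hp)
  refine hprod.trans ?_
  apply mul_le_mul_of_nonneg_left h2
  positivity


/-- `n` is non-deficient if `σ(n)/n ≥ 2`. -/
def NonDeficient (n : ℕ) : Prop := 2 * n ≤ ArithmeticFunction.sigma 1 n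

/-- `n` is primitive non-deficient if it is non-deficient and no proper divisor is
non-deficient. -/
def PrimitiveNonDeficient (n : ℕ) : Prop :=
  NonDeficient n ∧ ∀ d : ℕ, d ∣ n → d ≠ n → ¬ NonDeficient d

theorem stmt_14 :
    ∃ C : ℝ, 0 < C ∧ ∀ n : ℕ, 0 < n → PrimitiveNonDeficient n →
      H n ≤ 2 + C / (n.minFac : ℝ) := by
  refine ⟨8, by norm_num, ?_⟩
  intro n hn hpnd
  obtain ⟨hnd, hmin⟩ := hpnd
  have hn1 : n ≠ 1 := by
    rintro rfl
    have h1 : ArithmeticFunction.sigma 1 1 = 1 := by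
      rw [ArithmeticFunction.sigma_one_apply, Nat.divisors_one, Finset.sum_singleton]
    rw [NonDeficient, h1] at hnd
    omega
  have hn2 : 2 ≤ n := by omega
  have hp : n.minFac.Prime := Nat.minFac_prime hn1
  have hpd : n.minFac ∣ n := Nat.minFac_dvd n
  set p := n.minFac with hpdef
  set m := n / p with hmdef
  have hnm : n = p * m := (Nat.mul_div_cancel' hpd).symm
  have hm0 : m ≠ 0 := by
    intro h; rw [h, mul_zero] at hnm; omega
  have hmn : m ≠ n := by
    have : m < n := Nat.div_lt_self (by omega) hp.one_lt
    omega
  have hdefm : ¬ NonDeficient m := hmin m (Nat.div_dvd_of_dvd hpd) hmn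
  have hσm : ArithmeticFunction.sigma 1 m < 2 * m := by
    rw [NonDeficient] at hdefm
    omega
  have hσn : ArithmeticFunction.sigma 1 n ≤ (p + 1) * (2 * m) := by
    refine le_trans (sigma_le_succ_mul p n hp hpd (by omega)) ?_
    exact Nat.mul_le_mul_left _ (le_of_lt hσm)
  -- real versions
  have hP2 : (2:ℝ) ≤ (p:ℝ) := by exact_mod_cast hp.two_le
  have hM1 : (1:ℝ) ≤ (m:ℝ) := by
    have : 1 ≤ m := by omega
    exact_mod_cast this
  have hσR : (ArithmeticFunction.sigma 1 n : ℝ) ≤ ((p:ℝ) + 1) * (2 * (m:ℝ)) := by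
    exact_mod_cast hσn
  have hnR : (n:ℝ) = (p:ℝ) * (m:ℝ) := by exact_mod_cast hnm
  have hfrac : (ArithmeticFunction.sigma 1 n : ℝ) / (n:ℝ) ≤ 2 * ((p:ℝ) + 1) / (p:ℝ) := by
    rw [hnR, div_le_div_iff₀ (by nlinarith) (by linarith)]
    nlinarith
  have hH := H_le n hn2
  rw [← hpdef] at hH
  have hstep : H n ≤ (2 * ((p:ℝ) + 1) / (p:ℝ)) * ((p:ℝ) / ((p:ℝ) - 1)) := by
    refine hH.trans ?_
    apply mul_le_mul_of_nonneg_right hfrac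
    exact le_of_lt (div_pos (by linarith) (by linarith))
  refine hstep.trans ?_
  have heq : (2 * ((p:ℝ) + 1) / (p:ℝ)) * ((p:ℝ) / ((p:ℝ) - 1))
      = 2 * ((p:ℝ) + 1) / ((p:ℝ) - 1) := by
    have h0 : (p:ℝ) ≠ 0 := by linarith
    have h1 : (p:ℝ) - 1 ≠ 0 := by intro h; nlinarith
    field_simp
  rw [heq]
  have heq2 : 2 + (8:ℝ) / (p:ℝ) = (2 * (p:ℝ) + 8) / (p:ℝ) := by
    field_simp
  rw [heq2, div_le_div_iff₀ (by linarith) (by linarith)]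
  nlinarith
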